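/- Let K be a number field and let G_K = K^* ⋉ A_{K,f} be the transformation groupoid of the multiplication action of K^* on the finite adele ring. Then G_K is non-wandering: for every nonempty compact open subset U ⊆ A_{K,f} there exist x ∈ A_{K,f} and g ∈ K^* with gx ≠ x and both x ∈ U and gx ∈ U. -/

import Mathlib

open IsDedekindDomain

open nonZeroDivisors Pointwise in
private lemma statement14_aux (R K : Type*) [CommRing R] [IsDedekindDomain R] [Field K]
    [Algebra R K] [IsFractionRing R K] [Nonempty (HeightOneSpectrum R)] [CharZero K]
    (U : Set (FiniteAdeleRing R K)) (hUo : IsOpen U) (hU : U.Nonempty) :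
    ∃ (x : FiniteAdeleRing R K) (g : K), g ≠ 0 ∧
      algebraMap K (FiniteAdeleRing R K) g * x ≠ x ∧
      x ∈ U ∧
      algebraMap K (FiniteAdeleRing R K) g * x ∈ U := by
  classical
  have hnt : Nontrivial (FiniteAdeleRing R K) := by
    refine ⟨0, 1, fun h => ?_⟩
    obtain ⟨v⟩ := (inferInstance : Nonempty (HeightOneSpectrum R))
    exact zero_ne_one (congrFun (congrArg Subtype.val h) v)
  have hinjK : ∀ m : R, m ≠ 0 → algebraMap R K m ≠ 0 :=
    fun m hm h' => hm (IsFractionRing.injective R K (by simpa using h'))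
  have hinj : ∀ m : R, m ≠ 0 → algebraMap R (FiniteAdeleRing R K) m ≠ 0 := by
    intro m hm h
    have h2 : algebraMap K (FiniteAdeleRing R K) (algebraMap R K m) = 0 := by
      rw [← IsScalarTower.algebraMap_apply]; exact h
    exact hinjK m hm ((algebraMap K (FiniteAdeleRing R K)).injective h2)
  have hkey : ∀ W ∈ nhds (0 : FiniteAdeleRing R K), ∃ t : R, t ≠ 0 ∧ t ≠ -1 ∧
      algebraMap R (FiniteAdeleRing R K) t ∈ W := by
    intro W hW
    have hopen : ∀ v : HeightOneSpectrum R,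
        IsOpen ((v.adicCompletionIntegers K : ValuationSubring _) : Set (v.adicCompletion K)) :=
      fun v => Valued.isOpen_valuationSubring _
    have h1 := RestrictedProduct.nhds_zero_eq_map_structureMap
      (R := fun v : HeightOneSpectrum R => v.adicCompletion K)
      (B := fun v => v.adicCompletionIntegers K) hopen
    have hW' : (RestrictedProduct.structureMap (fun v : HeightOneSpectrum R => v.adicCompletion K)
        (fun v => (v.adicCompletionIntegers K : Set (v.adicCompletion K))) Filter.cofinite) ⁻¹' W
        ∈ nhds (0 : Π v : HeightOneSpectrum R, v.adicCompletionIntegers K) :=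
      Filter.mem_map.mp (h1 ▸ hW)
    rw [nhds_pi, Filter.mem_pi] at hW'
    obtain ⟨I, hIf, T, hT, hIT⟩ := hW'
    obtain ⟨v0⟩ := (inferInstance : Nonempty (HeightOneSpectrum R))
    choose b hb hb0 using fun v : HeightOneSpectrum R =>
      Submodule.exists_mem_ne_zero_of_ne_bot v.ne_bot
    set a : R := ∏ v ∈ insert v0 hIf.toFinset, b v with ha_def
    have ha0 : a ≠ 0 := Finset.prod_ne_zero_iff.mpr fun v _ => hb0 v
    have haI : ∀ v ∈ insert v0 hIf.toFinset, a ∈ v.asIdeal := fun v hv => by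
      rw [ha_def, ← Finset.mul_prod_erase _ b hv]; exact Ideal.mul_mem_right _ _ (hb v)
    let elem : R → Π v : HeightOneSpectrum R, v.adicCompletionIntegers K := fun r v =>
      ⟨((algebraMap R K r : K) : v.adicCompletion K), by
        rw [HeightOneSpectrum.mem_adicCompletionIntegers, HeightOneSpectrum.valuedAdicCompletion_eq_valuation']
        exact v.valuation_le_one r⟩
    have hstr : ∀ r : R, algebraMap R (FiniteAdeleRing R K) r =
        RestrictedProduct.structureMap _ _ Filter.cofinite (elem r) := fun r => rfl
    have hev : ∀ v ∈ I, ∀ᶠ n : ℕ in Filter.atTop, elem (a ^ n) v ∈ T v := by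
      intro v hv
      have hlt : Valued.v ((algebraMap R K a : K) : v.adicCompletion K) < 1 := by
        rw [HeightOneSpectrum.valuedAdicCompletion_eq_valuation']
        exact (v.valuation_lt_one_iff_mem a).mpr
          (haI v (Finset.mem_insert_of_mem (hIf.mem_toFinset.mpr hv)))
      have htend : Filter.Tendsto (fun n : ℕ => elem (a ^ n) v) Filter.atTop (nhds 0) := by
        rw [Topology.IsInducing.subtypeVal.tendsto_nhds_iff]
        convert Valued.tendsto_zero_pow_of_v_lt_one hlt using 1
        funext n
        show (((algebraMap R K (a ^ n) : K)) : v.adicCompletion K) =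
          ((algebraMap R K a : K) : v.adicCompletion K) ^ n
        induction n with
        | zero => rw [pow_zero, pow_zero, map_one]; exact HeightOneSpectrum.adicCompletion.coe_one ..
        | succ k ih => rw [pow_succ, pow_succ, map_mul, HeightOneSpectrum.adicCompletion.coe_mul, ih]
        rfl
      exact htend (hT v)
    obtain ⟨n, hn⟩ := ((Filter.eventually_all_finite hIf).2 hev).and
      (Filter.eventually_ge_atTop 1) |>.exists
    refine ⟨a ^ n, pow_ne_zero _ ha0, fun h => ?_, ?_⟩
    · have hu : IsUnit (a ^ n) := h ▸ isUnit_one.neg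
      rw [isUnit_pow_iff (by omega)] at hu
      exact v0.isPrime.ne_top (Ideal.eq_top_of_isUnit_mem _ (haI v0 (Finset.mem_insert_self _ _)) hu)
    · rw [hstr]
      exact hIT fun v hv => hn.1 v hv
  obtain ⟨x₀, hx₀⟩ := hU
  obtain ⟨x, hxU, hx0⟩ : ∃ x ∈ U, x ≠ 0 := by
    by_cases h : x₀ = 0
    · subst h
      obtain ⟨r, hr0, -, hr⟩ := hkey U (hUo.mem_nhds hx₀)
      exact ⟨algebraMap R (FiniteAdeleRing R K) r, hr, hinj _ hr0⟩
    · exact ⟨x₀, hx₀, h⟩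
  have hWn : {y : FiniteAdeleRing R K | x + y * x ∈ U} ∈ nhds 0 := by
    have hc : Continuous fun y : FiniteAdeleRing R K => x + y * x :=
      continuous_const.add (continuous_id.mul continuous_const)
    have := hc.tendsto 0
    rw [zero_mul, add_zero] at this
    exact this (hUo.mem_nhds hxU)
  obtain ⟨t, ht0, htm1, htW⟩ := hkey _ hWn
  set g : K := 1 + algebraMap R K t with hg_def
  have hg0 : g ≠ 0 := by
    rw [hg_def]
    intro h
    apply htm1
    have h' : algebraMap R K t = algebraMap R K (-1) := by
      rw [map_neg, map_one]
      linear_combination h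
    exact IsFractionRing.injective R K h'
  have hmul : algebraMap K (FiniteAdeleRing R K) g * x
      = x + algebraMap R (FiniteAdeleRing R K) t * x := by
    rw [hg_def, map_add, map_one, ← IsScalarTower.algebraMap_apply, add_mul, one_mul]
  refine ⟨x, g, hg0, ?_, hxU, ?_⟩
  · rw [hmul]
    intro h
    have h0 : algebraMap R (FiniteAdeleRing R K) t * x = 0 := add_eq_left.mp h
    have hu : IsUnit (algebraMap R (FiniteAdeleRing R K) t) := by
      rw [IsScalarTower.algebraMap_apply R K (FiniteAdeleRing R K)]
      exact (isUnit_iff_ne_zero.mpr (hinjK t ht0)).map (algebraMap K (FiniteAdeleRing R K))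
    obtain ⟨u, hu⟩ := hu
    rw [← hu] at h0
    exact hx0 ((Units.mul_right_eq_zero u).mp h0)
  · rw [hmul]
    exact htW

/-- The transformation groupoid `G_K = K^* ⋉ A_{K,f}` is non-wandering: for every nonempty
compact open subset `U` of the finite adele ring there are `x ∈ A_{K,f}` and `g ∈ K^*` with
`g·x ≠ x` and both `x, g·x ∈ U`. -/
theorem statement14 (K : Type*) [Field K] [NumberField K]
    (U : Set (FiniteAdeleRing (NumberField.RingOfIntegers K) K))
    (hUc : IsCompact U) (hUo : IsOpen U) (hU : U.Nonempty) :
    ∃ (x : FiniteAdeleRing (NumberField.RingOfIntegers K) K) (g : K), g ≠ 0 ∧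
      algebraMap K (FiniteAdeleRing (NumberField.RingOfIntegers K) K) g * x ≠ x ∧
      x ∈ U ∧
      algebraMap K (FiniteAdeleRing (NumberField.RingOfIntegers K) K) g * x ∈ U := by
  have : Nonempty (HeightOneSpectrum (NumberField.RingOfIntegers K)) :=
    Nonempty.map (HeightOneSpectrum.equivMaximalSpectrum
      (NumberField.RingOfIntegers.not_isField K)).symm inferInstance
  exact statement14_aux (NumberField.RingOfIntegers K) K U hUo hU
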